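/- For T > 0 and z, w ∈ Δ = {z ∈ ℂ : |arg z| < π/4}, one has ∫₀ᵀ (conjugate of ∂ₓK(w, T-t)) · ∂ₓK(z, T-t) dt = K^q(z,w;T), where ∂ₓK(z,s) = -z/(4√π s^{3/2}) e^{-z²/(4s)} and K^q(z,w;T) = (1/(4π)) e^{-z²/(4T)} e^{-w̄²/(4T)} (4 z w̄/(z² + w̄²)² + z w̄/(T(z² + w̄²))). -/

import Mathlib

open Complex MeasureTheory

/-- `∂ₓK(z,s) = -z/(4√π s^{3/2}) e^{-z²/(4s)}`. -/
noncomputable def dxK (z : ℂ) (t : ℝ) : ℂ :=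
  -z / (4 * Real.sqrt Real.pi * (t ^ ((3:ℝ)/2) : ℝ)) * Complex.exp (-z ^ 2 / (4 * (t : ℂ)))

open Filter Topology Set in
/-- Sector lemma: if `|arg z| < π/4` and `z ≠ 0` then `Re (z²) > 0`. -/
lemma sector_re_sq_pos {z : ℂ} (hz0 : z ≠ 0) (hz : |Complex.arg z| < Real.pi / 4) :
    0 < (z ^ 2).re := by
  have h1 : ‖z‖ * Real.cos z.arg = z.re := Complex.norm_mul_cos_arg z
  have h2 : ‖z‖ * Real.sin z.arg = z.im := Complex.norm_mul_sin_arg z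
  have habs : 0 < ‖z‖ := norm_pos_iff.mpr hz0
  have hre : (z ^ 2).re = z.re * z.re - z.im * z.im := by
    rw [sq, Complex.mul_re]
  have hcos : 0 < Real.cos (2 * z.arg) := by
    apply Real.cos_pos_of_mem_Ioo
    have := abs_lt.mp hz
    constructor <;> [linarith [this.1]; linarith [this.2]]
  have : (z ^ 2).re = (‖z‖) ^ 2 * Real.cos (2 * z.arg) := by
    rw [hre, ← h1, ← h2, Real.cos_two_mul']
    ring
  rw [this]
  positivity

open Filter Topology Set in
lemma tendsto_cpow_mul_exp_neg {a : ℂ} (ha : 0 < a.re) (n : ℕ) :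
    Tendsto (fun u : ℝ => (u : ℂ) ^ n * Complex.exp (-(a * u))) atTop (𝓝 0) := by
  have H : Tendsto (fun x : ℝ => x ^ n * Real.exp (-x)) atTop (𝓝 0) :=
    Real.tendsto_pow_mul_exp_neg_atTop_nhds_zero n
  have Hc : Tendsto (fun u : ℝ => a.re * u) atTop atTop :=
    Tendsto.const_mul_atTop ha tendsto_id
  have H2 : Tendsto (fun u : ℝ => (a.re * u) ^ n * Real.exp (-(a.re * u))) atTop (𝓝 0) :=
    H.comp Hc
  have H3 : Tendsto (fun u : ℝ => u ^ n * Real.exp (-(a.re * u))) atTop (𝓝 0) := by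
    have := H2.const_mul ((a.re ^ n)⁻¹)
    rw [mul_zero] at this
    refine this.congr' ?_
    filter_upwards [eventually_ge_atTop (0:ℝ)] with u _
    have hane : a.re ^ n ≠ 0 := pow_ne_zero n ha.ne'
    field_simp [mul_pow]
    ring
  rw [tendsto_zero_iff_norm_tendsto_zero]
  refine squeeze_zero_norm' ?_ H3
  filter_upwards [eventually_ge_atTop (0:ℝ)] with u hu
  have : ‖(u : ℂ) ^ n * Complex.exp (-(a * u))‖ = |u| ^ n * Real.exp (-(a.re * u)) := by
    rw [norm_mul, norm_pow, Complex.norm_exp]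
    simp
  rw [norm_norm, this, _root_.abs_of_nonneg hu]

open Filter Topology Set in
lemma tendsto_inv_pow_exp_neg {a : ℂ} (ha : 0 < a.re) (n : ℕ) :
    Tendsto (fun s : ℝ => ((s : ℂ)⁻¹) ^ n * Complex.exp (-(a * (s : ℂ)⁻¹)))
      (𝓝[>] (0:ℝ)) (𝓝 0) := by
  have := (tendsto_cpow_mul_exp_neg ha n).comp tendsto_inv_nhdsGT_zero
  refine this.congr fun s => ?_
  simp [Function.comp, Complex.ofReal_inv]

noncomputable def Faux (c1 c2 a : ℂ) (s : ℝ) : ℂ :=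
  (c1 * (s : ℂ)⁻¹ + c2) * Complex.exp (-(a * (s : ℂ)⁻¹))

noncomputable def Gaux (c1 c2 a : ℂ) (s : ℝ) : ℂ :=
  if s = 0 then 0 else Faux c1 c2 a s

open Filter Topology Set in
lemma Faux_hasDerivAt (c1 c2 a : ℂ) {s : ℝ} (hs : 0 < s) :
    HasDerivAt (Faux c1 c2 a)
      (Complex.exp (-(a * (s : ℂ)⁻¹)) *
        ((c1 * a) * ((s : ℂ)⁻¹) ^ 3 + (c2 * a - c1) * ((s : ℂ)⁻¹) ^ 2)) s := by
  have hsC : (s : ℂ) ≠ 0 := Complex.ofReal_ne_zero.mpr hs.ne'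
  have hinv : HasDerivAt (fun t : ℝ => ((t : ℂ))⁻¹) (-(((s : ℂ)) ^ 2)⁻¹) s :=
    (hasDerivAt_inv hsC).comp_ofReal
  have hlin : HasDerivAt (fun t : ℝ => c1 * ((t : ℂ))⁻¹ + c2)
      (c1 * (-(((s : ℂ)) ^ 2)⁻¹)) s := (hinv.const_mul c1).add_const c2
  have hE : HasDerivAt (fun t : ℝ => -(a * ((t : ℂ))⁻¹))
      (-(a * (-(((s : ℂ)) ^ 2)⁻¹))) s := (hinv.const_mul a).neg
  have := hlin.mul hE.cexp
  convert this using 1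
  · rfl
  · rfl
  ring

open Filter Topology Set in
lemma Gaux_hasDerivAt (c1 c2 a : ℂ) {s : ℝ} (hs : 0 < s) :
    HasDerivAt (Gaux c1 c2 a)
      (Complex.exp (-(a * (s : ℂ)⁻¹)) *
        ((c1 * a) * ((s : ℂ)⁻¹) ^ 3 + (c2 * a - c1) * ((s : ℂ)⁻¹) ^ 2)) s := by
  refine (Faux_hasDerivAt c1 c2 a hs).congr_of_eventuallyEq ?_
  filter_upwards [eventually_ne_nhds hs.ne'] with t ht
  simp [Gaux, ht]

open Filter Topology Set in
lemma Faux_tendsto_zero {a : ℂ} (ha : 0 < a.re) (c1 c2 : ℂ) :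
    Tendsto (Faux c1 c2 a) (𝓝[>] (0:ℝ)) (𝓝 0) := by
  have h1 := (tendsto_inv_pow_exp_neg ha 1).const_mul c1
  have h0 := (tendsto_inv_pow_exp_neg ha 0).const_mul c2
  have h := h1.add h0
  rw [mul_zero, mul_zero, add_zero] at h
  refine h.congr fun s => ?_
  simp only [Faux, pow_one, pow_zero, one_mul]
  ring

open Filter Topology Set in
lemma Gaux_continuousOn {a : ℂ} (ha : 0 < a.re) (c1 c2 : ℂ) :
    ContinuousOn (Gaux c1 c2 a) (Ici (0:ℝ)) := by
  intro x hx
  rcases eq_or_lt_of_le (mem_Ici.mp hx) with h0 | hpos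
  · subst h0
    rw [← continuousWithinAt_Ioi_iff_Ici]
    have hG0 : Gaux c1 c2 a 0 = 0 := by simp [Gaux]
    unfold ContinuousWithinAt
    rw [hG0]
    refine (Faux_tendsto_zero ha c1 c2).congr' ?_
    filter_upwards [self_mem_nhdsWithin] with t ht
    simp [Gaux, (mem_Ioi.mp ht).ne']
  · have hsC : (x : ℂ) ≠ 0 := Complex.ofReal_ne_zero.mpr hpos.ne'
    have hci : ContinuousAt (fun t : ℝ => ((t : ℂ))⁻¹) x :=
      Complex.continuous_ofReal.continuousAt.inv₀ hsC
    have hF : ContinuousAt (Faux c1 c2 a) x := by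
      exact ((hci.const_mul c1).add continuousAt_const).mul ((hci.const_mul a).neg.cexp)
    refine (hF.congr ?_).continuousWithinAt
    filter_upwards [eventually_ne_nhds hpos.ne'] with t ht
    simp [Gaux, ht]

set_option maxHeartbeats 1000000 in
open Filter Topology Set intervalIntegral in
/-- For `T > 0` and `z, w` in the sector `Δ`,
`∫₀ᵀ (conj ∂ₓK(w,T-t)) ∂ₓK(z,T-t) dt = K^q(z,w;T)` where
`K^q(z,w;T) = (1/(4π)) e^{-z²/(4T)} e^{-w̄²/(4T)} (4zw̄/(z²+w̄²)² + zw̄/(T(z²+w̄²)))`. -/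
theorem Kq_integral_formula (T : ℝ) (hT : 0 < T) (z w : ℂ)
    (hz : |Complex.arg z| < Real.pi / 4) (hw : |Complex.arg w| < Real.pi / 4) :
    ∫ t in Set.Ioo (0:ℝ) T, (starRingEnd ℂ) (dxK w (T - t)) * dxK z (T - t)
      = (1 / (4 * (Real.pi : ℂ))) *
          Complex.exp (-z ^ 2 / (4 * (T : ℂ))) *
          Complex.exp (-((starRingEnd ℂ) w) ^ 2 / (4 * (T : ℂ))) *
          (4 * z * (starRingEnd ℂ) w / (z ^ 2 + ((starRingEnd ℂ) w) ^ 2) ^ 2 +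
            z * (starRingEnd ℂ) w / ((T : ℂ) * (z ^ 2 + ((starRingEnd ℂ) w) ^ 2))) := by
  by_cases hz0 : z = 0
  · simp [hz0, dxK]
  by_cases hw0 : w = 0
  · simp [hw0, dxK]
  have hπ : (0:ℝ) < Real.pi := Real.pi_pos
  have hπC : ((Real.pi : ℝ) : ℂ) ≠ 0 := Complex.ofReal_ne_zero.mpr hπ.ne'
  have hTC : ((T : ℝ) : ℂ) ≠ 0 := Complex.ofReal_ne_zero.mpr hT.ne'
  obtain ⟨u, hu⟩ : ∃ u : ℂ, (starRingEnd ℂ) w = u := ⟨_, rfl⟩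
  rw [hu]
  obtain ⟨a, ha⟩ : ∃ a : ℂ, z ^ 2 + u ^ 2 = a := ⟨_, rfl⟩
  rw [ha]
  have hzre : 0 < (z ^ 2).re := sector_re_sq_pos hz0 hz
  have hure : 0 < (u ^ 2).re := by
    rw [← hu, ← map_pow]
    rw [Complex.conj_re]
    exact sector_re_sq_pos hw0 hw
  have hare : 0 < a.re := by rw [← ha, Complex.add_re]; linarith
  have ha0 : a ≠ 0 := fun h => by simp [h] at hare
  have ha4 : 0 < (a / 4).re := by
    have h4 : (a / 4).re = a.re / 4 := by
      rw [show (4:ℂ) = ((4:ℝ):ℂ) by norm_num, Complex.div_ofReal_re]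
    rw [h4]; linarith
  -- pointwise formula for the integrand
  have key : ∀ s : ℝ, 0 < s → (starRingEnd ℂ) (dxK w s) * dxK z s
      = z * u / (16 * (Real.pi : ℂ)) * ((s:ℂ)⁻¹) ^ 3
          * Complex.exp (-((a / 4) * (s:ℂ)⁻¹)) := by
    intro s hs
    have hsC : (s : ℂ) ≠ 0 := Complex.ofReal_ne_zero.mpr hs.ne'
    have hs32pos : (0:ℝ) < s ^ ((3:ℝ)/2) := Real.rpow_pos_of_pos hs _
    have hs32C : ((s ^ ((3:ℝ)/2) : ℝ) : ℂ) ≠ 0 := Complex.ofReal_ne_zero.mpr hs32pos.ne'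
    have hsqpos : (0:ℝ) < Real.sqrt Real.pi := Real.sqrt_pos.mpr hπ
    have hsqC : ((Real.sqrt Real.pi : ℝ) : ℂ) ≠ 0 := Complex.ofReal_ne_zero.mpr hsqpos.ne'
    have hs32 : ((s ^ ((3:ℝ)/2) : ℝ) : ℂ) * ((s ^ ((3:ℝ)/2) : ℝ) : ℂ) = (s:ℂ) ^ 3 := by
      rw [← Complex.ofReal_mul, ← Real.rpow_add hs]
      norm_num
    have hsqrt : ((Real.sqrt Real.pi : ℝ) : ℂ) * ((Real.sqrt Real.pi : ℝ) : ℂ)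
        = (Real.pi : ℂ) := by
      rw [← Complex.ofReal_mul, Real.mul_self_sqrt hπ.le]
    have hconj : (starRingEnd ℂ) (dxK w s)
        = -u / (4 * (Real.sqrt Real.pi : ℝ) * ((s ^ ((3:ℝ)/2) : ℝ) : ℂ))
            * Complex.exp (-u ^ 2 / (4 * (s : ℂ))) := by
      rw [dxK, map_mul, ← Complex.exp_conj]
      simp [map_div₀, map_ofNat, Complex.conj_ofReal, hu]
    rw [hconj, dxK, mul_mul_mul_comm, ← Complex.exp_add]
    have hpref : -u / (4 * (Real.sqrt Real.pi : ℝ) * ((s ^ ((3:ℝ)/2) : ℝ) : ℂ))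
        * (-z / (4 * (Real.sqrt Real.pi : ℝ) * ((s ^ ((3:ℝ)/2) : ℝ) : ℂ)))
        = z * u / (16 * (Real.pi : ℂ)) * ((s:ℂ)⁻¹) ^ 3 := by
      rw [div_mul_div_comm, neg_mul_neg]
      rw [show (4 * ((Real.sqrt Real.pi : ℝ):ℂ) * ((s ^ ((3:ℝ)/2) : ℝ) : ℂ))
          * (4 * ((Real.sqrt Real.pi : ℝ):ℂ) * ((s ^ ((3:ℝ)/2) : ℝ) : ℂ))
          = 16 * (Real.pi : ℂ) * (s:ℂ) ^ 3 from by
        linear_combination (16 * ((s ^ ((3:ℝ)/2) : ℝ) : ℂ) * ((s ^ ((3:ℝ)/2) : ℝ) : ℂ)) * hsqrt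
          + 16 * (Real.pi : ℂ) * hs32]
      field_simp
    have hexp : -u ^ 2 / (4 * (s:ℂ)) + -z ^ 2 / (4 * (s:ℂ)) = -((a / 4) * (s:ℂ)⁻¹) := by
      rw [← ha]; field_simp; ring
    rw [hpref, hexp]
  -- derivative of Gaux matches the integrand
  have hGderiv : ∀ x ∈ Ioo (0:ℝ) T,
      HasDerivAt (Gaux (z * u / (4 * (Real.pi : ℂ) * a)) (z * u / ((Real.pi : ℂ) * a ^ 2)) (a/4))
        ((starRingEnd ℂ) (dxK w x) * dxK z x) x := by
    intro x hx
    have h := Gaux_hasDerivAt (z * u / (4 * (Real.pi : ℂ) * a))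
      (z * u / ((Real.pi : ℂ) * a ^ 2)) (a/4) hx.1
    convert h using 1
    rw [key x hx.1]
    have hsC : (x : ℂ) ≠ 0 := Complex.ofReal_ne_zero.mpr hx.1.ne'
    have e1 : z * u / ((Real.pi : ℂ) * a ^ 2) * (a / 4) - z * u / (4 * (Real.pi : ℂ) * a)
        = 0 := by
      field_simp
      ring
    have e2 : z * u / (4 * (Real.pi : ℂ) * a) * (a / 4) = z * u / (16 * (Real.pi : ℂ)) := by
      field_simp
      ring
    rw [e1, e2, zero_mul, add_zero]
    ring
  -- continuity of the integrand on [0, T]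
  have hgcont : ContinuousOn (fun t : ℝ => (starRingEnd ℂ) (dxK w t) * dxK z t)
      (Icc (0:ℝ) T) := by
    intro x hx
    rcases eq_or_lt_of_le hx.1 with h0 | hpos
    · subst h0
      apply ContinuousWithinAt.mono _ (Icc_subset_Ici_self : Icc (0:ℝ) T ⊆ Ici 0)
      rw [← continuousWithinAt_Ioi_iff_Ici]
      have hg0 : (starRingEnd ℂ) (dxK w (0:ℝ)) * dxK z (0:ℝ) = 0 := by
        simp [dxK, Real.zero_rpow (by norm_num : ((3:ℝ)/2) ≠ 0)]
      show Tendsto (fun t : ℝ => (starRingEnd ℂ) (dxK w t) * dxK z t) (𝓝[>] (0:ℝ))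
        (𝓝 ((starRingEnd ℂ) (dxK w (0:ℝ)) * dxK z (0:ℝ)))
      rw [hg0]
      have hlim := (tendsto_inv_pow_exp_neg ha4 3).const_mul (z * u / (16 * (Real.pi : ℂ)))
      rw [mul_zero] at hlim
      refine hlim.congr' ?_
      filter_upwards [self_mem_nhdsWithin] with t ht
      rw [key t (mem_Ioi.mp ht)]
      ring
    · have hsC : (x : ℂ) ≠ 0 := Complex.ofReal_ne_zero.mpr hpos.ne'
      have hrp : ContinuousAt (fun t : ℝ => ((t ^ ((3:ℝ)/2) : ℝ) : ℂ)) x :=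
        Complex.continuous_ofReal.continuousAt.comp
          (Real.continuousAt_rpow_const x _ (Or.inl hpos.ne'))
      have h1 : ((Real.sqrt Real.pi : ℝ) : ℂ) ≠ 0 :=
        Complex.ofReal_ne_zero.mpr (Real.sqrt_pos.mpr hπ).ne'
      have h2 : ((x ^ ((3:ℝ)/2) : ℝ) : ℂ) ≠ 0 :=
        Complex.ofReal_ne_zero.mpr (Real.rpow_pos_of_pos hpos _).ne'
      have hden : (4 : ℂ) * (Real.sqrt Real.pi : ℝ) * ((x ^ ((3:ℝ)/2) : ℝ) : ℂ) ≠ 0 :=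
        mul_ne_zero (mul_ne_zero (by norm_num) h1) h2
      have hden2 : (4 : ℂ) * (x : ℂ) ≠ 0 := by
        simpa using hsC
      have hdx : ∀ v : ℂ, ContinuousAt (dxK v) x := by
        intro v
        apply ContinuousAt.mul
        · exact ContinuousAt.div continuousAt_const
            ((continuousAt_const.mul continuousAt_const).mul hrp) hden
        · exact ContinuousAt.cexp (ContinuousAt.div continuousAt_const
            (continuousAt_const.mul Complex.continuous_ofReal.continuousAt) hden2)
      exact (((Complex.continuous_conj.continuousAt).comp (hdx w)).mul (hdx z)).continuousWithinAt
  -- transfer to an interval integral and apply FTC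
  have step1 : ∫ t in Set.Ioo (0:ℝ) T, (starRingEnd ℂ) (dxK w (T - t)) * dxK z (T - t)
      = ∫ s in (0:ℝ)..T, (starRingEnd ℂ) (dxK w s) * dxK z s := by
    rw [← MeasureTheory.integral_Ioc_eq_integral_Ioo, ← intervalIntegral.integral_of_le hT.le,
      intervalIntegral.integral_comp_sub_left
        (fun s => (starRingEnd ℂ) (dxK w s) * dxK z s) T, sub_self, sub_zero]
  have step2 : ∫ s in (0:ℝ)..T, (starRingEnd ℂ) (dxK w s) * dxK z s
      = Gaux (z * u / (4 * (Real.pi : ℂ) * a)) (z * u / ((Real.pi : ℂ) * a ^ 2)) (a/4) T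
        - Gaux (z * u / (4 * (Real.pi : ℂ) * a)) (z * u / ((Real.pi : ℂ) * a ^ 2)) (a/4) 0 := by
    refine intervalIntegral.integral_eq_sub_of_hasDeriv_right_of_le hT.le
      ((Gaux_continuousOn ha4 _ _).mono Icc_subset_Ici_self)
      (fun x hx => (hGderiv x hx).hasDerivWithinAt) ?_
    exact hgcont.intervalIntegrable_of_Icc hT.le
  rw [step1, step2]
  have hG0 : Gaux (z * u / (4 * (Real.pi : ℂ) * a)) (z * u / ((Real.pi : ℂ) * a ^ 2)) (a/4) 0
      = 0 := by simp [Gaux]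
  have hGT : Gaux (z * u / (4 * (Real.pi : ℂ) * a)) (z * u / ((Real.pi : ℂ) * a ^ 2)) (a/4) T
      = (z * u / (4 * (Real.pi : ℂ) * a) * (T:ℂ)⁻¹ + z * u / ((Real.pi : ℂ) * a ^ 2))
          * Complex.exp (-((a/4) * (T:ℂ)⁻¹)) := by
    simp [Gaux, Faux, hT.ne']
  rw [hG0, hGT, sub_zero]
  have hexp : Complex.exp (-z ^ 2 / (4 * (T : ℂ))) * Complex.exp (-u ^ 2 / (4 * (T : ℂ)))
      = Complex.exp (-((a/4) * (T:ℂ)⁻¹)) := by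
    rw [← Complex.exp_add]
    congr 1
    rw [← ha]
    field_simp
    ring
  rw [show (1 / (4 * (Real.pi : ℂ))) * Complex.exp (-z ^ 2 / (4 * (T : ℂ)))
      * Complex.exp (-u ^ 2 / (4 * (T : ℂ)))
      * (4 * z * u / a ^ 2 + z * u / ((T : ℂ) * a))
      = (1 / (4 * (Real.pi : ℂ)))
        * (Complex.exp (-z ^ 2 / (4 * (T : ℂ))) * Complex.exp (-u ^ 2 / (4 * (T : ℂ))))
        * (4 * z * u / a ^ 2 + z * u / ((T : ℂ) * a)) from by ring, hexp]
  have hfin : z * u / (4 * (Real.pi:ℂ) * a) * ((T:ℂ))⁻¹ + z * u / ((Real.pi:ℂ) * a ^ 2)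
      = 1 / (4 * (Real.pi:ℂ)) * (4 * z * u / a ^ 2 + z * u / ((T:ℂ) * a)) := by
    have h4 : (4:ℂ) ≠ 0 := by norm_num
    have ha2 : a ^ 2 ≠ 0 := pow_ne_zero _ ha0
    have hne1 : 4 * (Real.pi:ℂ) * a * (T:ℂ) ≠ 0 :=
      mul_ne_zero (mul_ne_zero (mul_ne_zero h4 hπC) ha0) hTC
    have hne2 : (Real.pi:ℂ) * a ^ 2 ≠ 0 := mul_ne_zero hπC ha2
    have hne3 : 4 * (Real.pi:ℂ) * a ^ 2 ≠ 0 := mul_ne_zero (mul_ne_zero h4 hπC) ha2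
    have hne4 : 4 * (Real.pi:ℂ) * ((T:ℂ) * a) ≠ 0 :=
      mul_ne_zero (mul_ne_zero h4 hπC) (mul_ne_zero hTC ha0)
    rw [← div_eq_mul_inv, div_div, mul_add, div_mul_div_comm, div_mul_div_comm, one_mul,
      one_mul, div_add_div _ _ hne1 hne2, div_add_div _ _ hne3 hne4,
      div_eq_div_iff (mul_ne_zero hne1 hne2) (mul_ne_zero hne3 hne4)]
    ring
  rw [hfin]
  ring
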